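/- For every multi-index β ∈ ℕ_0^d, all t < s and x, y ∈ ℝ^d, the monomial identity y^β Γ_0(t,x;s,y) = (M(s-t,x))^β Γ_0(t,x;s,y) holds, where (M(s-t,x))^β denotes the composition M_1^{β_1} ∘ ⋯ ∘ M_d^{β_d} of the (mutually commuting on Γ_0 and its derivatives) component operators, and y^β = y_1^{β_1}⋯y_d^{β_d}. -/

import Mathlib

open MeasureTheory Matrix Finset

noncomputable section

/-- Index set for `ℝ^d` split into groups of sizes `p 0, …, p r`:
the element `⟨i, a⟩` is the `a`-th coordinate of the `i`-th group. -/
abbrev Idx (r : ℕ) (p : Fin (r + 1) → ℕ) : Type := (i : Fin (r + 1)) × Fin (p i)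

variable {r : ℕ} {p : Fin (r + 1) → ℕ}

/-- The dilation exponent `σ_j = 2i+1` for a coordinate `j` in group `i`. -/
def sigmaWt (j : Idx r p) : ℕ := 2 * (j.1 : ℕ) + 1

/-- The `B`-length `|β|_B = Σ_j σ_j β_j` of a multi-index `β`. -/
def bwt (β : Idx r p → ℕ) : ℕ := ∑ j, sigmaWt j * β j

/-- The homogeneous norm `[x]_B = Σ_j |x_j|^{1/σ_j}`. -/
def hnorm (x : Idx r p → ℝ) : ℝ := ∑ j, |x j| ^ (1 / (sigmaWt j : ℝ))

/-- Structural assumption on the matrix `B`: the group sizes are decreasing and positive,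
the only nonzero blocks are the subdiagonal ones `B_1, …, B_r`, and the block `B_i`
(of size `p i × p (i-1)`) has full rank `p i`. -/
structure IsKolB (B : Matrix (Idx r p) (Idx r p) ℝ) : Prop where
  anti : Antitone p
  ppos : ∀ i, 1 ≤ p i
  sparse : ∀ j k : Idx r p, (j.1 : ℕ) ≠ (k.1 : ℕ) + 1 → B j k = 0
  rk : ∀ i k : Fin (r + 1), (i : ℕ) = (k : ℕ) + 1 →
    (Matrix.of fun (a : Fin (p i)) (b : Fin (p k)) => B ⟨i, a⟩ ⟨k, b⟩).rank = p i

/-- Matrix exponential `e^M = Σ_n M^n / n!` (defined entrywise). -/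
def mexp (M : Matrix (Idx r p) (Idx r p) ℝ) : Matrix (Idx r p) (Idx r p) ℝ :=
  Matrix.of fun i j => ∑' n : ℕ, ((n.factorial : ℝ)⁻¹ • M ^ n) i j

/-- The `d×d` matrix whose top-left `p 0 × p 0` block is `A₀` and whose other entries vanish. -/
def embed0 (A₀ : Matrix (Fin (p 0)) (Fin (p 0)) ℝ) : Matrix (Idx r p) (Idx r p) ℝ :=
  Matrix.of fun j k =>
    if h : j.1 = 0 ∧ k.1 = 0 then
      A₀ (Fin.cast (congrArg p h.1) j.2) (Fin.cast (congrArg p h.2) k.2)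
    else 0

/-- The covariance matrix `C(t) = ∫_0^t e^{sB} A e^{sBᵀ} ds`. -/
def covMat (B A : Matrix (Idx r p) (Idx r p) ℝ) (t : ℝ) :
    Matrix (Idx r p) (Idx r p) ℝ :=
  Matrix.of fun j k => ∫ s in (0:ℝ)..t, (mexp (s • B) * A * (mexp (s • B))ᵀ) j k

/-- The Gaussian kernel
`Γ₀(t,x;s,y) = (2π)^{-d/2} |det C(s-t)|^{-1/2} exp(-⟨C(s-t)⁻¹(y-e^{(s-t)B}x), y-e^{(s-t)B}x⟩/2)`. -/
def gauss (B A : Matrix (Idx r p) (Idx r p) ℝ)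
    (t : ℝ) (x : Idx r p → ℝ) (s : ℝ) (y : Idx r p → ℝ) : ℝ :=
  (2 * Real.pi) ^ (-(Fintype.card (Idx r p) : ℝ) / 2) *
    |(covMat B A (s - t)).det| ^ (-(1:ℝ) / 2) *
    Real.exp (-(1/2) *
      ((covMat B A (s - t))⁻¹ *ᵥ (y - mexp ((s - t) • B) *ᵥ x)) ⬝ᵥ
        (y - mexp ((s - t) • B) *ᵥ x))

/-- Partial derivative `∂_{x_i}`. -/
def pdx (i : Idx r p) (f : (Idx r p → ℝ) → ℝ) : (Idx r p → ℝ) → ℝ :=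
  fun x => fderiv ℝ f x (Pi.single i 1)

/-- Iterated partial derivative `D^β = ∂_{x_1}^{β_1} ⋯ ∂_{x_d}^{β_d}`. -/
def Dx (β : Idx r p → ℕ) (f : (Idx r p → ℝ) → ℝ) : (Idx r p → ℝ) → ℝ :=
  (Finset.univ (α := Idx r p)).toList.foldr (fun i g => (pdx i)^[β i] g) f

/-- The indices of the first group (coordinates `1, …, p_0`). -/
def G0set (r : ℕ) (p : Fin (r + 1) → ℕ) : Finset (Idx r p) :=
  Finset.univ.filter fun i => (i.1 : ℕ) = 0

/-- A vector supported in the coordinates of the first group. -/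
def suppG0 (ξ : Idx r p → ℝ) : Prop := ∀ i : Idx r p, (i.1 : ℕ) ≠ 0 → ξ i = 0

/-- The vector field `Y f(t,x) = ⟨Bx, ∇_x f⟩ + ∂_t f`. -/
def Yop (B : Matrix (Idx r p) (Idx r p) ℝ)
    (f : ℝ → (Idx r p → ℝ) → ℝ) : ℝ → (Idx r p → ℝ) → ℝ :=
  fun t x => (∑ j, (B *ᵥ x) j * pdx j (f t) x) + deriv (fun τ => f τ x) t

/-- The derivative `Y^k ∂_x^β f`. -/
def YDx (B : Matrix (Idx r p) (Idx r p) ℝ) (k : ℕ) (β : Idx r p → ℕ)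
    (f : ℝ → (Idx r p → ℝ) → ℝ) : ℝ → (Idx r p → ℝ) → ℝ :=
  (Yop B)^[k] (fun t => Dx β (f t))

/-- The multi-index factorial `β! = Π_j (β_j)!`. -/
def mfact (β : Idx r p → ℕ) : ℕ := ∏ j, (β j).factorial

/-- The `n`-th order intrinsic Taylor polynomial of `a` centered at `z̄ = (tb, xb)`:
`T_n(a,z̄)(t,x) = Σ_{2k+|β|_B ≤ n} (1/(k!β!)) (Y^k ∂^β a)(z̄) (t-tb)^k (x-e^{(t-tb)B}xb)^β`,
with `T_n ≡ 0` for `n < 0`. -/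
def Tpoly (B : Matrix (Idx r p) (Idx r p) ℝ) (a : ℝ → (Idx r p → ℝ) → ℝ)
    (tb : ℝ) (xb : Idx r p → ℝ) (n : ℤ) : ℝ → (Idx r p → ℝ) → ℝ :=
  fun t x =>
    ∑ k ∈ Finset.range (n.toNat + 1),
      ∑ β ∈ Fintype.piFinset (fun _ : Idx r p => Finset.range (n.toNat + 1)),
        if 2 * (k : ℤ) + (bwt β : ℤ) ≤ n then
          ((k.factorial * mfact β : ℕ) : ℝ)⁻¹ * YDx B k β a tb xb * (t - tb) ^ k *
            ∏ j, (x j - (mexp ((t - tb) • B) *ᵥ xb) j) ^ β j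
        else 0

/-- `M̄(t) = e^{-tB} C(t) e^{-tBᵀ}`. -/
def Mbar (B A : Matrix (Idx r p) (Idx r p) ℝ) (t : ℝ) : Matrix (Idx r p) (Idx r p) ℝ :=
  mexp (-(t • B)) * covMat B A t * (mexp (-(t • B)))ᵀ

/-- The first order operator `M_i(t,x) f = (e^{tB}x)_i f + (e^{tB} M̄(t) ∇_x f)_i`. -/
def Mop (B A : Matrix (Idx r p) (Idx r p) ℝ) (τ : ℝ) (i : Idx r p)
    (f : (Idx r p → ℝ) → ℝ) : (Idx r p → ℝ) → ℝ :=
  fun x => (mexp (τ • B) *ᵥ x) i * f x + ((mexp (τ • B) * Mbar B A τ) *ᵥ fun j => pdx j f x) i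

/-- The composition `M^β = M_1^{β_1} ∘ ⋯ ∘ M_d^{β_d}`. -/
def Mpow (B A : Matrix (Idx r p) (Idx r p) ℝ) (τ : ℝ) (β : Idx r p → ℕ)
    (f : (Idx r p → ℝ) → ℝ) : (Idx r p → ℝ) → ℝ :=
  (Finset.univ (α := Idx r p)).toList.foldr (fun i g => (Mop B A τ i)^[β i] g) f

/-- The shifted operator `(M_i(τ,x) - c) f`. -/
def MopShift (B A : Matrix (Idx r p) (Idx r p) ℝ) (τ : ℝ) (c : ℝ) (i : Idx r p)
    (f : (Idx r p → ℝ) → ℝ) : (Idx r p → ℝ) → ℝ :=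
  fun x => Mop B A τ i f x - c * f x

/-- The composition `(M(τ,x) - c)^β` of shifted operators. -/
def MshiftPow (B A : Matrix (Idx r p) (Idx r p) ℝ) (τ : ℝ) (c : Idx r p → ℝ)
    (β : Idx r p → ℕ) (f : (Idx r p → ℝ) → ℝ) : (Idx r p → ℝ) → ℝ :=
  (Finset.univ (α := Idx r p)).toList.foldr (fun i g => (MopShift B A τ (c i) i)^[β i] g) f

/-- The operator `W_i(τ) f = (e^{-τBᵀ} ∇_x f)_i`. -/
def Wop (B : Matrix (Idx r p) (Idx r p) ℝ) (τ : ℝ) (i : Idx r p)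
    (f : (Idx r p → ℝ) → ℝ) : (Idx r p → ℝ) → ℝ :=
  fun x => (mexp (-(τ • Bᵀ)) *ᵥ fun j => pdx j f x) i

/-- The composition `W^β(τ) = W_1^{β_1}(τ) ∘ ⋯ ∘ W_d^{β_d}(τ)`. -/
def Wpow (B : Matrix (Idx r p) (Idx r p) ℝ) (τ : ℝ) (β : Idx r p → ℕ)
    (f : (Idx r p → ℝ) → ℝ) : (Idx r p → ℝ) → ℝ :=
  (Finset.univ (α := Idx r p)).toList.foldr (fun i g => (Wop B τ i)^[β i] g) f

/-- The Taylor polynomial `T_n(a,z̄)(s,·)` with the commuting operators `M_i(τ,x)` substituted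
for the spatial arguments. -/
def TpolyOp (B A : Matrix (Idx r p) (Idx r p) ℝ) (a : ℝ → (Idx r p → ℝ) → ℝ)
    (tb : ℝ) (xb : Idx r p → ℝ) (n : ℤ) (s τ : ℝ)
    (f : (Idx r p → ℝ) → ℝ) : (Idx r p → ℝ) → ℝ :=
  fun x =>
    ∑ k ∈ Finset.range (n.toNat + 1),
      ∑ β ∈ Fintype.piFinset (fun _ : Idx r p => Finset.range (n.toNat + 1)),
        if 2 * (k : ℤ) + (bwt β : ℤ) ≤ n then
          ((k.factorial * mfact β : ℕ) : ℝ)⁻¹ * YDx B k β a tb xb * (s - tb) ^ k *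
            MshiftPow B A τ (mexp ((s - tb) • B) *ᵥ xb) β f x
        else 0

/-- The operator `G_n(t,s,x)` of the expansion. -/
def Gop (B A : Matrix (Idx r p) (Idx r p) ℝ)
    (a : Idx r p → Idx r p → ℝ → (Idx r p → ℝ) → ℝ)
    (aD : Idx r p → ℝ → (Idx r p → ℝ) → ℝ) (tb : ℝ) (xb : Idx r p → ℝ)
    (n : ℤ) (t s : ℝ) (f : (Idx r p → ℝ) → ℝ) : (Idx r p → ℝ) → ℝ :=
  fun x =>
    (1/2) * ∑ i ∈ G0set r p, ∑ j ∈ G0set r p,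
        (TpolyOp B A (a i j) tb xb n s (s - t) (Wop B (s - t) i (Wop B (s - t) j f)) x
          - TpolyOp B A (a i j) tb xb (n - 1) s (s - t) (Wop B (s - t) i (Wop B (s - t) j f)) x)
      + ∑ i ∈ G0set r p,
        (TpolyOp B A (aD i) tb xb (n - 1) s (s - t) (Wop B (s - t) i f) x
          - TpolyOp B A (aD i) tb xb (n - 2) s (s - t) (Wop B (s - t) i f) x)

/-- `((K_n - K_{n-1}) g)(s,ξ)` for a purely spatial function `g`. -/
def Kdiff (B : Matrix (Idx r p) (Idx r p) ℝ)
    (a : Idx r p → Idx r p → ℝ → (Idx r p → ℝ) → ℝ)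
    (aD : Idx r p → ℝ → (Idx r p → ℝ) → ℝ) (tb : ℝ) (xb : Idx r p → ℝ)
    (n : ℤ) (g : (Idx r p → ℝ) → ℝ) (s : ℝ) (ξ : Idx r p → ℝ) : ℝ :=
  (1/2) * ∑ i ∈ G0set r p, ∑ j ∈ G0set r p,
      (Tpoly B (a i j) tb xb n s ξ - Tpoly B (a i j) tb xb (n - 1) s ξ) * pdx i (pdx j g) ξ
    + ∑ i ∈ G0set r p, (Tpoly B (aD i) tb xb (n - 1) s ξ - Tpoly B (aD i) tb xb (n - 2) s ξ) *
        pdx i g ξ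

/-- The matrix `A(z̄)` with top-left block `(a_{ij}(z̄))` and zeros elsewhere. -/
def AzMat (a : Idx r p → Idx r p → ℝ → (Idx r p → ℝ) → ℝ) (tb : ℝ) (xb : Idx r p → ℝ) :
    Matrix (Idx r p) (Idx r p) ℝ :=
  Matrix.of fun i j => if (i.1 : ℕ) = 0 ∧ (j.1 : ℕ) = 0 then a i j tb xb else 0

/-- `u₀(t,x) = ∫ Γ₀(t,x;T,y) φ(y) dy`. -/
def u0fn (B A : Matrix (Idx r p) (Idx r p) ℝ) (T : ℝ) (φ : (Idx r p → ℝ) → ℝ)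
    (t : ℝ) (x : Idx r p → ℝ) : ℝ :=
  ∫ y : Idx r p → ℝ, gauss B A t x T y * φ y

/-- The Duhamel recursion: `u_0 = ∫ Γ₀ φ` and
`u_n(t,x) = ∫_t^T ∫ Γ₀(t,x;s,ξ) Σ_{h=1}^n ((K_h - K_{h-1}) u_{n-h})(s,ξ) dξ ds`. -/
def useq (B : Matrix (Idx r p) (Idx r p) ℝ)
    (a : Idx r p → Idx r p → ℝ → (Idx r p → ℝ) → ℝ)
    (aD : Idx r p → ℝ → (Idx r p → ℝ) → ℝ) (tb : ℝ) (xb : Idx r p → ℝ)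
    (T : ℝ) (φ : (Idx r p → ℝ) → ℝ) : ℕ → ℝ → (Idx r p → ℝ) → ℝ
  | 0 => u0fn B (AzMat a tb xb) T φ
  | n + 1 => fun t x =>
      ∫ s in t..T, ∫ ξ : Idx r p → ℝ, gauss B (AzMat a tb xb) t x s ξ *
        ∑ h ∈ Finset.range (n + 1),
          Kdiff B a aD tb xb ((h : ℤ) + 1) (useq B a aD tb xb T φ (n - h) s) s ξ
  termination_by n => n
  decreasing_by omega

/-- Nested integral of a composition of operators `G_{i_1}(t,s_1) ⋯ G_{i_h}(t,s_h)` applied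
to `u`, over the simplex `lo ≤ s_1 ≤ ⋯ ≤ s_h ≤ T`. -/
def Lrec (B A : Matrix (Idx r p) (Idx r p) ℝ)
    (a : Idx r p → Idx r p → ℝ → (Idx r p → ℝ) → ℝ)
    (aD : Idx r p → ℝ → (Idx r p → ℝ) → ℝ) (tb : ℝ) (xb : Idx r p → ℝ)
    (t T : ℝ) (u : (Idx r p → ℝ) → ℝ) : List ℕ → ℝ → (Idx r p → ℝ) → ℝ
  | [] => fun _ => u
  | m :: ms => fun lo x =>
      ∫ s in lo..T, Gop B A a aD tb xb (m : ℤ) t s (Lrec B A a aD tb xb t T u ms s) x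

/-- The operator `L_n(t,T,x) = Σ_{h=1}^n ∫_t^T ds_1 ⋯ ∫_{s_{h-1}}^T ds_h
Σ_{i_1+⋯+i_h=n, i_j ≥ 1} G_{i_1}(t,s_1) ⋯ G_{i_h}(t,s_h)`. -/
def Lop (B A : Matrix (Idx r p) (Idx r p) ℝ)
    (a : Idx r p → Idx r p → ℝ → (Idx r p → ℝ) → ℝ)
    (aD : Idx r p → ℝ → (Idx r p → ℝ) → ℝ) (tb : ℝ) (xb : Idx r p → ℝ)
    (n : ℕ) (t T : ℝ) (u : (Idx r p → ℝ) → ℝ) : (Idx r p → ℝ) → ℝ :=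
  fun x => ∑ h ∈ Finset.Icc 1 n,
    ∑ iv ∈ (Fintype.piFinset fun _ : Fin h => Finset.Icc 1 n).filter (fun iv => ∑ j, iv j = n),
      Lrec B A a aD tb xb t T u (List.ofFn iv) t x

/-- The dilation matrix `D₀(λ) = diag(λ^{σ_1}, …, λ^{σ_d})`. -/
def D0mat (r : ℕ) (p : Fin (r + 1) → ℕ) (lam : ℝ) : Matrix (Idx r p) (Idx r p) ℝ :=
  Matrix.diagonal fun j => lam ^ sigmaWt j

/-- The index set `J_n` of Lemma A.8. -/
def Jset (r : ℕ) (p : Fin (r + 1) → ℕ) (n : ℕ) :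
    Finset ((Idx r p → ℕ) × (Idx r p → ℕ)) :=
  ((Fintype.piFinset fun _ : Idx r p => Finset.range (3 * n + 1)) ×ˢ
    (Fintype.piFinset fun _ : Idx r p => Finset.range (n + 1))).filter
    fun q => 1 ≤ ∑ j, q.1 j ∧ ∑ j, q.1 j ≤ 3 * n ∧ bwt q.2 ≤ n ∧
      0 ≤ (bwt q.1 : ℤ) - (bwt q.2 : ℤ) + (n : ℤ)

/-- The index set of pairs `(δ, α)` with `|δ| + |α| ≤ |β|` and `|δ|_B - |α|_B ≤ |β|_B`. -/
def Sset (β : Idx r p → ℕ) : Finset ((Idx r p → ℕ) × (Idx r p → ℕ)) :=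
  ((Fintype.piFinset fun _ : Idx r p => Finset.range (∑ j, β j + 1)) ×ˢ
    (Fintype.piFinset fun _ : Idx r p => Finset.range (∑ j, β j + 1))).filter
    fun q => (∑ j, q.1 j) + (∑ j, q.2 j) ≤ ∑ j, β j ∧
      (bwt q.1 : ℤ) - (bwt q.2 : ℤ) ≤ (bwt β : ℤ)

/-- The index set of multi-indices `α` with `|α| = |β|` and `|α|_B ≥ |β|_B`. -/
def Wset (β : Idx r p → ℕ) : Finset (Idx r p → ℕ) :=
  (Fintype.piFinset fun _ : Idx r p => Finset.range (∑ j, β j + 1)).filter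
    fun α => ∑ j, α j = ∑ j, β j ∧ bwt β ≤ bwt α


/-! ### Auxiliary lemmas -/

section AuxLemmas

variable {r : ℕ} {p : Fin (r + 1) → ℕ}

lemma Bpow_apply_eq_zero {B : Matrix (Idx r p) (Idx r p) ℝ} (hB : IsKolB B) :
    ∀ (n : ℕ) (j k : Idx r p), (j.1 : ℕ) ≠ (k.1 : ℕ) + n → (B ^ n) j k = 0 := by
  intro n
  induction n with
  | zero =>
      intro j k h
      rw [pow_zero]
      refine Matrix.one_apply_ne fun he => ?_
      subst he; omega
  | succ n ih =>
      intro j k h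
      rw [pow_succ, Matrix.mul_apply]
      refine Finset.sum_eq_zero fun l _ => ?_
      by_cases hl : (l.1 : ℕ) = (k.1 : ℕ) + 1
      · rw [ih j l (by omega), zero_mul]
      · rw [hB.sparse l k hl, mul_zero]

lemma Bpow_top {B : Matrix (Idx r p) (Idx r p) ℝ} (hB : IsKolB B) : B ^ (r + 1) = 0 := by
  ext j k
  rw [Matrix.zero_apply]
  exact Bpow_apply_eq_zero hB (r + 1) j k (by have := j.1.is_lt; omega)

lemma smulB_pow_top {B : Matrix (Idx r p) (Idx r p) ℝ} (hB : IsKolB B) (c : ℝ) :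
    (c • B) ^ (r + 1) = 0 := by
  rw [smul_pow, Bpow_top hB, smul_zero]

lemma mexp_eq_exp {M : Matrix (Idx r p) (Idx r p) ℝ} (hM : M ^ (r + 1) = 0) :
    mexp M = NormedSpace.exp M := by
  have hz : ∀ n ∉ Finset.range (r + 2), ((n.factorial : ℝ)⁻¹ • M ^ n) = 0 := by
    intro n hn
    rw [Finset.mem_range, not_lt] at hn
    rw [show n = (r + 1) + (n - (r + 1)) by omega, pow_add, hM, zero_mul, smul_zero]
  simp only [NormedSpace.exp_eq_tsum (𝕂 := ℝ)]
  rw [tsum_eq_sum hz]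
  ext j k
  rw [mexp, Matrix.of_apply,
    tsum_eq_sum (s := Finset.range (r + 2)) (fun n hn => by rw [hz n hn]; rfl)]
  simp [Finset.sum_apply, Matrix.sum_apply, Pi.smul_apply, smul_eq_mul]

lemma mexp_mul_mexp_neg {M : Matrix (Idx r p) (Idx r p) ℝ} (hM : M ^ (r + 1) = 0) :
    mexp M * mexp (-M) = 1 := by
  rw [mexp_eq_exp hM, mexp_eq_exp (M := -M) (by rw [neg_pow, hM, mul_zero]),
    ← Matrix.exp_add_of_commute M (-M) (Commute.neg_right (Commute.refl M)),
    add_neg_cancel, NormedSpace.exp_zero]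

lemma mexp_neg_mul_mexp {M : Matrix (Idx r p) (Idx r p) ℝ} (hM : M ^ (r + 1) = 0) :
    mexp (-M) * mexp M = 1 :=
  mul_eq_one_comm.mp (mexp_mul_mexp_neg hM)

end AuxLemmas

section AuxAnalytic

variable {r : ℕ} {p : Fin (r + 1) → ℕ}

/-- `mulVec` as a continuous linear map. -/
def mvCLM (M : Matrix (Idx r p) (Idx r p) ℝ) : (Idx r p → ℝ) →L[ℝ] (Idx r p → ℝ) :=
  LinearMap.toContinuousLinearMap (Matrix.mulVecLin M)

@[simp] lemma mvCLM_apply (M : Matrix (Idx r p) (Idx r p) ℝ) (v : Idx r p → ℝ) :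
    mvCLM M v = M *ᵥ v := rfl

/-- Derivative of the quadratic form. -/
def quadDer (Q E : Matrix (Idx r p) (Idx r p) ℝ) (w : Idx r p → ℝ) :
    (Idx r p → ℝ) →L[ℝ] ℝ :=
  ∑ i, ((Q *ᵥ w) i • -((ContinuousLinearMap.proj i).comp (mvCLM E))
    + w i • -((ContinuousLinearMap.proj i).comp (mvCLM (Q * E))))

lemma hasFDerivAt_quad (Q E : Matrix (Idx r p) (Idx r p) ℝ) (y x : Idx r p → ℝ) :
    HasFDerivAt (fun x' : Idx r p → ℝ => (Q *ᵥ (y - E *ᵥ x')) ⬝ᵥ (y - E *ᵥ x'))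
      (quadDer Q E (y - E *ᵥ x)) x := by
  have h2 : ∀ i : Idx r p, HasFDerivAt (fun x' : Idx r p → ℝ => (y - E *ᵥ x') i)
      (-((ContinuousLinearMap.proj i).comp (mvCLM E))) x := by
    intro i
    have hfun : (fun x' : Idx r p → ℝ => (y - E *ᵥ x') i)
        = fun x' => y i - ((ContinuousLinearMap.proj i).comp (mvCLM E)) x' := by
      funext x'; simp
    rw [hfun]
    exact (((ContinuousLinearMap.proj i).comp (mvCLM E)).hasFDerivAt).const_sub (y i)
  have h1 : ∀ i : Idx r p, HasFDerivAt (fun x' : Idx r p → ℝ => (Q *ᵥ (y - E *ᵥ x')) i)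
      (-((ContinuousLinearMap.proj i).comp (mvCLM (Q * E)))) x := by
    intro i
    have hfun : (fun x' : Idx r p → ℝ => (Q *ᵥ (y - E *ᵥ x')) i)
        = fun x' => (Q *ᵥ y) i - ((ContinuousLinearMap.proj i).comp (mvCLM (Q * E))) x' := by
      funext x'
      simp [Matrix.mulVec_sub, Matrix.mulVec_mulVec]
    rw [hfun]
    exact (((ContinuousLinearMap.proj i).comp (mvCLM (Q * E))).hasFDerivAt).const_sub _
  have hfun : (fun x' : Idx r p → ℝ => (Q *ᵥ (y - E *ᵥ x')) ⬝ᵥ (y - E *ᵥ x'))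
      = fun x' => ∑ i, (Q *ᵥ (y - E *ᵥ x')) i * (y - E *ᵥ x') i := by
    funext x'; rfl
  rw [hfun, quadDer]
  exact HasFDerivAt.fun_sum fun i _ => (h1 i).mul (h2 i)

/-- The Gaussian-type function with generic parameters. -/
def gfun (c : ℝ) (Q E : Matrix (Idx r p) (Idx r p) ℝ) (y : Idx r p → ℝ) :
    (Idx r p → ℝ) → ℝ :=
  fun x' => c * Real.exp (-(1/2) * (Q *ᵥ (y - E *ᵥ x')) ⬝ᵥ (y - E *ᵥ x'))

lemma gfun_hasFDerivAt (c : ℝ) (Q E : Matrix (Idx r p) (Idx r p) ℝ) (y x : Idx r p → ℝ) :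
    HasFDerivAt (gfun c Q E y)
      (gfun c Q E y x • ((-(1/2) : ℝ) • quadDer Q E (y - E *ᵥ x))) x := by
  have h := (((hasFDerivAt_quad Q E y x).const_mul (-(1/2) : ℝ)).exp).const_mul c
  have : gfun c Q E y x • ((-(1/2) : ℝ) • quadDer Q E (y - E *ᵥ x))
      = c • (Real.exp (-(1/2) * (Q *ᵥ (y - E *ᵥ x)) ⬝ᵥ (y - E *ᵥ x)) •
          ((-(1/2) : ℝ) • quadDer Q E (y - E *ᵥ x))) := by
    simp only [smul_smul, gfun]
    congr 1
    ring
  rw [this]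
  exact h

lemma gfun_differentiableAt (c : ℝ) (Q E : Matrix (Idx r p) (Idx r p) ℝ)
    (y x : Idx r p → ℝ) : DifferentiableAt ℝ (gfun c Q E y) x :=
  (gfun_hasFDerivAt c Q E y x).differentiableAt

lemma sum_symm_identity (Q E : Matrix (Idx r p) (Idx r p) ℝ) (hQ : Qᵀ = Q)
    (w : Idx r p → ℝ) (j : Idx r p) :
    ∑ i, w i * ((Q * E) i j) = ∑ i, (Q *ᵥ w) i * E i j := by
  simp only [Matrix.mul_apply, Matrix.mulVec, dotProduct, Finset.mul_sum,
    Finset.sum_mul]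
  rw [Finset.sum_comm]
  refine Finset.sum_congr rfl fun k _ => Finset.sum_congr rfl fun i _ => ?_
  have hq : Q i k = Q k i := by conv_lhs => rw [← hQ, Matrix.transpose_apply]
  rw [hq]; ring

lemma gfun_pdx (c : ℝ) (Q E : Matrix (Idx r p) (Idx r p) ℝ) (hQ : Qᵀ = Q)
    (y x : Idx r p → ℝ) (j : Idx r p) :
    pdx j (gfun c Q E y) x
      = gfun c Q E y x * (Eᵀ *ᵥ (Q *ᵥ (y - E *ᵥ x))) j := by
  have h := (gfun_hasFDerivAt c Q E y x).fderiv
  simp only [pdx]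
  rw [h]
  simp only [ContinuousLinearMap.coe_smul', Pi.smul_apply, quadDer,
    ContinuousLinearMap.sum_apply, ContinuousLinearMap.add_apply,
    ContinuousLinearMap.smul_apply, ContinuousLinearMap.neg_apply,
    ContinuousLinearMap.comp_apply, ContinuousLinearMap.proj_apply, mvCLM_apply,
    Matrix.mulVec_single_one, Matrix.col_apply, mul_one, smul_eq_mul]
  have hswap := sum_symm_identity Q E hQ (y - E *ᵥ x) j
  have hT : (Eᵀ *ᵥ (Q *ᵥ (y - E *ᵥ x))) j = ∑ i, (Q *ᵥ (y - E *ᵥ x)) i * E i j := by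
    simp only [Matrix.mulVec, dotProduct, Matrix.transpose_apply]
    exact Finset.sum_congr rfl fun i _ => mul_comm _ _
  rw [hT, ← hswap]
  have hexp : ∑ i : Idx r p, ((Q *ᵥ (y - E *ᵥ x)) i * -E i j + (y - E *ᵥ x) i * -(Q * E) i j)
      = -(∑ i : Idx r p, (Q *ᵥ (y - E *ᵥ x)) i * E i j)
        + -(∑ i : Idx r p, (y - E *ᵥ x) i * (Q * E) i j) := by
    rw [Finset.sum_add_distrib]
    congr 1 <;> simp [mul_neg]
  rw [hexp, hswap]
  ring
end AuxAnalytic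

section AuxMop

variable {r : ℕ} {p : Fin (r + 1) → ℕ}

lemma embed0_symm {A₀ : Matrix (Fin (p 0)) (Fin (p 0)) ℝ} (hA₀ : A₀.IsHermitian) :
    (embed0 A₀)ᵀ = embed0 (r := r) A₀ := by
  ext j k
  simp only [Matrix.transpose_apply, embed0, Matrix.of_apply]
  by_cases h1 : j.1 = 0 <;> by_cases h2 : k.1 = 0
  · rw [dif_pos ⟨h2, h1⟩, dif_pos ⟨h1, h2⟩]
    simpa using hA₀.apply (Fin.cast (congrArg p h1) j.2) (Fin.cast (congrArg p h2) k.2)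
  · rw [dif_neg (by tauto), dif_neg (by tauto)]
  · rw [dif_neg (by tauto), dif_neg (by tauto)]
  · rw [dif_neg (by tauto), dif_neg (by tauto)]

lemma covMat_symm {B A : Matrix (Idx r p) (Idx r p) ℝ} (hA : Aᵀ = A) (τ : ℝ) :
    (covMat B A τ)ᵀ = covMat B A τ := by
  have hsym : ∀ u : ℝ, (mexp (u • B) * A * (mexp (u • B))ᵀ)ᵀ
      = mexp (u • B) * A * (mexp (u • B))ᵀ := by
    intro u
    rw [Matrix.transpose_mul, Matrix.transpose_mul, Matrix.transpose_transpose, hA,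
      ← Matrix.mul_assoc]
  ext j k
  simp only [Matrix.transpose_apply, covMat, Matrix.of_apply]
  congr 1
  funext u
  have h := congrFun (congrFun (hsym u) j) k
  rw [Matrix.transpose_apply] at h
  exact h

/-- The Gaussian equals `gfun` with appropriate parameters. -/
lemma gauss_eq_gfun (B A : Matrix (Idx r p) (Idx r p) ℝ) (t s : ℝ) (y : Idx r p → ℝ) :
    (fun x' => gauss B A t x' s y)
      = gfun ((2 * Real.pi) ^ (-(Fintype.card (Idx r p) : ℝ) / 2) *
          |(covMat B A (s - t)).det| ^ (-(1:ℝ) / 2))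
        (covMat B A (s - t))⁻¹ (mexp ((s - t) • B)) y := by
  funext x'
  rw [gauss, gfun]

/-- The key single-operator identity: `M_i Γ₀ = y_i Γ₀`. -/
lemma Mop_gauss {B : Matrix (Idx r p) (Idx r p) ℝ} (hB : IsKolB B)
    {A : Matrix (Idx r p) (Idx r p) ℝ} (hA : Aᵀ = A) (t s : ℝ) (y : Idx r p → ℝ)
    (hdet : IsUnit (covMat B A (s - t)).det) (i : Idx r p) :
    Mop B A (s - t) i (fun x' => gauss B A t x' s y)
      = fun x => y i * gauss B A t x s y := by
  have hQ : ((covMat B A (s - t))⁻¹)ᵀ = (covMat B A (s - t))⁻¹ := by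
    rw [Matrix.transpose_nonsing_inv, covMat_symm hA]
  have hnil : ((s - t) • B) ^ (r + 1) = 0 := smulB_pow_top hB _
  have h1 : mexp ((s - t) • B) * mexp (-((s - t) • B)) = 1 := mexp_mul_mexp_neg hnil
  have h2 : (mexp (-((s - t) • B)))ᵀ * (mexp ((s - t) • B))ᵀ = 1 := by
    rw [← Matrix.transpose_mul, h1, Matrix.transpose_one]
  have hEM : mexp ((s - t) • B) * Mbar B A (s - t) * (mexp ((s - t) • B))ᵀ *
      (covMat B A (s - t))⁻¹ = 1 := by
    rw [Mbar]
    have hassoc : mexp ((s - t) • B) * (mexp (-((s - t) • B)) * covMat B A (s - t) *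
          (mexp (-((s - t) • B)))ᵀ) * (mexp ((s - t) • B))ᵀ
        = (mexp ((s - t) • B) * mexp (-((s - t) • B))) * (covMat B A (s - t) *
          ((mexp (-((s - t) • B)))ᵀ * (mexp ((s - t) • B))ᵀ)) := by
      simp only [Matrix.mul_assoc]
    rw [hassoc, h1, h2, Matrix.one_mul, Matrix.mul_one, Matrix.mul_nonsing_inv _ hdet]
  funext x
  have hgx : ∀ z, gauss B A t z s y
      = gfun ((2 * Real.pi) ^ (-(Fintype.card (Idx r p) : ℝ) / 2) *
          |(covMat B A (s - t)).det| ^ (-(1:ℝ) / 2))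
        (covMat B A (s - t))⁻¹ (mexp ((s - t) • B)) y z :=
    fun z => congrFun (gauss_eq_gfun B A t s y) z
  rw [Mop]
  simp only [hgx]
  have hvec : (fun j => pdx j (gfun ((2 * Real.pi) ^ (-(Fintype.card (Idx r p) : ℝ) / 2) *
          |(covMat B A (s - t)).det| ^ (-(1:ℝ) / 2))
        (covMat B A (s - t))⁻¹ (mexp ((s - t) • B)) y) x)
      = gfun ((2 * Real.pi) ^ (-(Fintype.card (Idx r p) : ℝ) / 2) *
          |(covMat B A (s - t)).det| ^ (-(1:ℝ) / 2))
        (covMat B A (s - t))⁻¹ (mexp ((s - t) • B)) y x •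
        ((mexp ((s - t) • B))ᵀ *ᵥ ((covMat B A (s - t))⁻¹ *ᵥ
          (y - mexp ((s - t) • B) *ᵥ x))) := by
    funext j
    rw [gfun_pdx _ _ _ hQ y x j]
    rfl
  rw [hvec, Matrix.mulVec_smul, Matrix.mulVec_mulVec, Matrix.mulVec_mulVec, hEM,
    Matrix.one_mulVec]
  simp only [Pi.smul_apply, Pi.sub_apply, smul_eq_mul]
  ring

lemma pdx_zero (j : Idx r p) (x : Idx r p → ℝ) : pdx j (fun _ : Idx r p → ℝ => (0:ℝ)) x = 0 := by
  simp [pdx]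

lemma Mop_zero (B A : Matrix (Idx r p) (Idx r p) ℝ) (τ : ℝ) (i : Idx r p) :
    Mop B A τ i (fun _ => (0:ℝ)) = fun _ => 0 := by
  funext x
  rw [Mop]
  have hv : (fun j : Idx r p => pdx j (fun _ : Idx r p → ℝ => (0:ℝ)) x) = 0 := by
    funext j; exact pdx_zero j x
  rw [hv, Matrix.mulVec_zero]
  simp

lemma Mpow_zero (B A : Matrix (Idx r p) (Idx r p) ℝ) (τ : ℝ) (β : Idx r p → ℕ) :
    Mpow B A τ β (fun _ => (0:ℝ)) = fun _ => 0 := by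
  have hiter : ∀ (i : Idx r p) (k : ℕ),
      (Mop B A τ i)^[k] (fun _ => (0:ℝ)) = fun _ => 0 := by
    intro i k
    induction k with
    | zero => rfl
    | succ k ih => rw [Function.iterate_succ_apply, Mop_zero, ih]
  rw [Mpow]
  induction (Finset.univ (α := Idx r p)).toList with
  | nil => rfl
  | cons i l ihl => rw [List.foldr_cons, ihl, hiter]

end AuxMop

section AuxMain

variable {r : ℕ} {p : Fin (r + 1) → ℕ}

lemma gauss_of_det_zero {B A : Matrix (Idx r p) (Idx r p) ℝ} {t s : ℝ}
    (h : (covMat B A (s - t)).det = 0) (y : Idx r p → ℝ) :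
    (fun x' => gauss B A t x' s y) = fun _ => (0:ℝ) := by
  funext x'
  rw [gauss, h, abs_zero, Real.zero_rpow (by norm_num : (-(1:ℝ)/2) ≠ 0), mul_zero, zero_mul]

lemma Mop_const_mul_gauss {B : Matrix (Idx r p) (Idx r p) ℝ} (hB : IsKolB B)
    {A : Matrix (Idx r p) (Idx r p) ℝ} (hA : Aᵀ = A) (t s : ℝ) (y : Idx r p → ℝ)
    (hdet : IsUnit (covMat B A (s - t)).det) (i : Idx r p) (c : ℝ) :
    Mop B A (s - t) i (fun x' => c * gauss B A t x' s y)
      = fun x => (c * y i) * gauss B A t x s y := by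
  have hdiff : ∀ x, DifferentiableAt ℝ (fun x' => gauss B A t x' s y) x := by
    intro x
    rw [gauss_eq_gfun B A t s y]
    exact gfun_differentiableAt _ _ _ y x
  funext x
  have hm := congrFun (Mop_gauss hB hA t s y hdet i) x
  rw [Mop] at hm ⊢
  have hpdx : ∀ j, pdx j (fun x'' => c * gauss B A t x'' s y) x
      = c * pdx j (fun x'' => gauss B A t x'' s y) x := by
    intro j
    simp only [pdx]
    rw [fderiv_const_mul (hdiff x) c]
    simp
  have hv : (fun j => pdx j (fun x'' => c * gauss B A t x'' s y) x)
      = c • (fun j => pdx j (fun x'' => gauss B A t x'' s y) x) := by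
    funext j; rw [hpdx]; rfl
  rw [hv, Matrix.mulVec_smul]
  simp only [Pi.smul_apply, smul_eq_mul] at hm ⊢
  linear_combination c * hm

lemma Mpow_gauss {B : Matrix (Idx r p) (Idx r p) ℝ} (hB : IsKolB B)
    {A : Matrix (Idx r p) (Idx r p) ℝ} (hA : Aᵀ = A) (t s : ℝ) (y : Idx r p → ℝ)
    (hdet : IsUnit (covMat B A (s - t)).det) (β : Idx r p → ℕ) :
    Mpow B A (s - t) β (fun x' => gauss B A t x' s y)
      = fun x => (∏ i, y i ^ β i) * gauss B A t x s y := by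
  have hiter : ∀ (i : Idx r p) (k : ℕ) (c : ℝ),
      (Mop B A (s - t) i)^[k] (fun x' => c * gauss B A t x' s y)
        = fun x' => (c * y i ^ k) * gauss B A t x' s y := by
    intro i k
    induction k with
    | zero => intro c; simp
    | succ k ih =>
        intro c
        rw [Function.iterate_succ_apply, Mop_const_mul_gauss hB hA t s y hdet i c, ih]
        funext x'
        ring_nf
  have key : ∀ (l : List (Idx r p)) (c : ℝ),
      List.foldr (fun i g => (Mop B A (s - t) i)^[β i] g)
          (fun x' => c * gauss B A t x' s y) l
        = fun x' => (c * (l.map fun i => y i ^ β i).prod) * gauss B A t x' s y := by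
    intro l
    induction l with
    | nil => intro c; simp
    | cons i l ihl =>
        intro c
        rw [List.foldr_cons, ihl c, hiter i (β i) _]
        funext x'
        rw [List.map_cons, List.prod_cons]
        ring
  have h1 : (fun x' => gauss B A t x' s y) = fun x' => 1 * gauss B A t x' s y := by
    funext x'; rw [one_mul]
  rw [Mpow, h1, key Finset.univ.toList 1]
  funext x'
  rw [Finset.prod_map_toList]
  ring

end AuxMain

/-- For every multi-index `β`, all `t < s` and `x, y`, the monomial identity
`y^β Γ₀(t,x;s,y) = (M(s-t,x))^β Γ₀(t,x;s,y)` holds. -/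
theorem gauss_monomial_symmetry {r : ℕ} {p : Fin (r + 1) → ℕ}
    (B : Matrix (Idx r p) (Idx r p) ℝ) (hB : IsKolB B)
    (A₀ : Matrix (Fin (p 0)) (Fin (p 0)) ℝ) (hA₀ : A₀.PosDef)
    (β : Idx r p → ℕ) (t s : ℝ) (hts : t < s) (x y : Idx r p → ℝ) :
    (∏ i, y i ^ β i) * gauss B (embed0 A₀) t x s y
      = Mpow B (embed0 A₀) (s - t) β (fun x' => gauss B (embed0 A₀) t x' s y) x := by
  by_cases hdet : IsUnit (covMat B (embed0 A₀) (s - t)).det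
  · rw [Mpow_gauss hB (embed0_symm hA₀.1) t s y hdet β]
  · have h0 : (covMat B (embed0 A₀) (s - t)).det = 0 := by
      simpa [isUnit_iff_ne_zero] using hdet
    have hx : gauss B (embed0 A₀) t x s y = 0 := congrFun (gauss_of_det_zero h0 y) x
    rw [gauss_of_det_zero h0 y, Mpow_zero, hx, mul_zero]
end
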